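/- Let X1, X2, X3 be mutually independent random variables on a common probability space taking values in finite sets, each with entropy a. Let Y12, Y20, Y21, Y22 be finite-valued random variables with H(Y12) ≤ a, H(Y21) ≤ a, H(Y22) ≤ a, such that Y20 is a deterministic function of (X1, X2), Y21 is a deterministic function of (Y12, Y20), and Y22 is a deterministic function of (X3, Y21). If H((X1, X2) | (Y12, Y22)) ≤ ε for some ε ≥ 0, then H((Y21, Y22)) ≤ a + 2ε. -/
import Mathlib


open scoped BigOperators

/-- The probability that the random variable `X` (on finite sample space `Ω`
with probability mass function `μ`) takes the value `a`. -/
noncomputable def probOf {Ω : Type} [Fintype Ω] {α : Type} [DecidableEq α]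
    (μ : Ω → ℝ) (X : Ω → α) (a : α) : ℝ :=
  ∑ ω : Ω, if X ω = a then μ ω else 0

/-- Shannon entropy (natural-log base) of a finite-valued random variable. -/
noncomputable def entropy {Ω : Type} [Fintype Ω] {α : Type} [Fintype α] [DecidableEq α]
    (μ : Ω → ℝ) (X : Ω → α) : ℝ :=
  ∑ a : α, -(probOf μ X a * Real.log (probOf μ X a))

/-- Conditional entropy `H(X | Y) = H(X, Y) - H(Y)`. -/
noncomputable def condEntropy {Ω : Type} [Fintype Ω] {α β : Type}
    [Fintype α] [DecidableEq α] [Fintype β] [DecidableEq β]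
    (μ : Ω → ℝ) (X : Ω → α) (Y : Ω → β) : ℝ :=
  entropy μ (fun ω => (X ω, Y ω)) - entropy μ Y

/-- `μ` is a probability mass function on the finite sample space `Ω`. -/
def IsPMF {Ω : Type} [Fintype Ω] (μ : Ω → ℝ) : Prop :=
  (∀ ω, 0 ≤ μ ω) ∧ ∑ ω : Ω, μ ω = 1

/-- Independence of two finite-valued random variables: the joint distribution
factorizes. -/
def IndepRV {Ω : Type} [Fintype Ω] {α β : Type} [DecidableEq α] [DecidableEq β]
    (μ : Ω → ℝ) (X : Ω → α) (Y : Ω → β) : Prop :=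
  ∀ a b, probOf μ (fun ω => (X ω, Y ω)) (a, b) = probOf μ X a * probOf μ Y b

/-- Mutual independence of three finite-valued random variables: the joint
distribution factorizes. -/
def MutIndep3 {Ω : Type} [Fintype Ω] {α β γ : Type}
    [DecidableEq α] [DecidableEq β] [DecidableEq γ]
    (μ : Ω → ℝ) (X : Ω → α) (Y : Ω → β) (Z : Ω → γ) : Prop :=
  ∀ a b c, probOf μ (fun ω => (X ω, Y ω, Z ω)) (a, b, c) =
    probOf μ X a * probOf μ Y b * probOf μ Z c

namespace Stmt3Aux

variable {Ω : Type} [Fintype Ω] {μ : Ω → ℝ}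

lemma probOf_nonneg {α : Type} [DecidableEq α] (hμ0 : ∀ ω, 0 ≤ μ ω) (X : Ω → α) (t : α) :
    0 ≤ probOf μ X t :=
  Finset.sum_nonneg fun ω _ => by split <;> simp [hμ0 ω]

lemma probOf_eq_of_iff {α β : Type} [DecidableEq α] [DecidableEq β]
    (T : Ω → α) (T' : Ω → β) (t : α) (t' : β) (h : ∀ ω, T ω = t ↔ T' ω = t') :
    probOf μ T t = probOf μ T' t' :=
  Finset.sum_congr rfl fun ω _ => by rw [if_congr (h ω) rfl rfl]

lemma sum_probOf (hμ : IsPMF μ) {α : Type} [Fintype α] [DecidableEq α] (X : Ω → α) :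
    ∑ t : α, probOf μ X t = 1 := by
  unfold probOf
  rw [Finset.sum_comm]
  calc ∑ ω, ∑ t : α, (if X ω = t then μ ω else 0) = ∑ ω, μ ω := by
        refine Finset.sum_congr rfl fun ω _ => ?_
        simp
    _ = 1 := hμ.2

lemma sum_probOf_pair_left {α β : Type} [Fintype α] [DecidableEq α] [DecidableEq β]
    (U : Ω → α) (V : Ω → β) (b : β) :
    ∑ a : α, probOf μ (fun ω => (U ω, V ω)) (a, b) = probOf μ V b := by
  unfold probOf
  rw [Finset.sum_comm]
  refine Finset.sum_congr rfl fun ω _ => ?_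
  by_cases h : V ω = b <;> simp [Prod.ext_iff, h]

lemma sum_probOf_pair_right {α β : Type} [DecidableEq α] [Fintype β] [DecidableEq β]
    (U : Ω → α) (V : Ω → β) (a : α) :
    ∑ b : β, probOf μ (fun ω => (U ω, V ω)) (a, b) = probOf μ U a := by
  unfold probOf
  rw [Finset.sum_comm]
  refine Finset.sum_congr rfl fun ω _ => ?_
  by_cases h : U ω = a <;> simp [Prod.ext_iff, h]

lemma entropy_comp_inj {α β : Type} [Fintype α] [DecidableEq α] [Fintype β] [DecidableEq β]
    (e : α → β) (he : Function.Injective e) (X : Ω → α) :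
    entropy μ (fun ω => e (X ω)) = entropy μ X := by
  unfold entropy
  have h0 : ∀ b ∈ Finset.univ, b ∉ Finset.univ.image e →
      -(probOf μ (fun ω => e (X ω)) b * Real.log (probOf μ (fun ω => e (X ω)) b)) = 0 := by
    intro b _ hb
    have hz : probOf μ (fun ω => e (X ω)) b = 0 := by
      apply Finset.sum_eq_zero; intro ω _
      have : e (X ω) ≠ b := fun hc => hb (Finset.mem_image.2 ⟨X ω, Finset.mem_univ _, hc⟩)
      simp [this]
    rw [hz]; simp
  rw [← Finset.sum_subset (Finset.subset_univ (Finset.univ.image e)) h0,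
      Finset.sum_image (fun a _ a' _ h => he h)]
  refine Finset.sum_congr rfl fun t _ => ?_
  have : probOf μ (fun ω => e (X ω)) (e t) = probOf μ X t :=
    probOf_eq_of_iff _ _ _ _ (fun ω => ⟨fun h => he h, fun h => by rw [h]⟩)
  rw [this]

lemma entropy_le_entropy_pair {α β : Type} [Fintype α] [DecidableEq α] [Fintype β] [DecidableEq β]
    (hμ : IsPMF μ) (U : Ω → α) (V : Ω → β) :
    entropy μ V ≤ entropy μ (fun ω => (U ω, V ω)) := by
  unfold entropy
  rw [Fintype.sum_prod_type_right]
  refine Finset.sum_le_sum fun b _ => ?_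
  have hm : ∑ a, probOf μ (fun ω => (U ω, V ω)) (a, b) = probOf μ V b := sum_probOf_pair_left U V b
  have h0 : ∀ a, 0 ≤ probOf μ (fun ω => (U ω, V ω)) (a, b) := fun a => probOf_nonneg hμ.1 _ _
  calc -(probOf μ V b * Real.log (probOf μ V b))
      = ∑ a, -(probOf μ (fun ω => (U ω, V ω)) (a, b) * Real.log (probOf μ V b)) := by
        rw [← hm, Finset.sum_mul, ← Finset.sum_neg_distrib]
    _ ≤ ∑ a, -(probOf μ (fun ω => (U ω, V ω)) (a, b) *
          Real.log (probOf μ (fun ω => (U ω, V ω)) (a, b))) := by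
        refine Finset.sum_le_sum fun a _ => ?_
        rcases eq_or_lt_of_le (h0 a) with h | h
        · rw [← h]; simp
        · have hle : probOf μ (fun ω => (U ω, V ω)) (a, b) ≤ probOf μ V b :=
            hm ▸ Finset.single_le_sum (fun a' _ => h0 a') (Finset.mem_univ a)
          exact neg_le_neg (mul_le_mul_of_nonneg_left (Real.log_le_log h hle) h.le)

lemma gibbs_submod {α β γ : Type} [Fintype α] [Fintype β] [Fintype γ]
    (p3 : α → β → γ → ℝ) (pab : α → β → ℝ) (pbc : β → γ → ℝ) (pb : β → ℝ)
    (h3 : ∀ a b c, 0 ≤ p3 a b c)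
    (mAB : ∀ a b, ∑ c, p3 a b c = pab a b)
    (mBC : ∀ b c, ∑ a, p3 a b c = pbc b c)
    (mB : ∀ b, ∑ a, pab a b = pb b)
    (mB' : ∀ b, ∑ c, pbc b c = pb b)
    (tot : ∑ b, pb b = 1) :
    (∑ a, ∑ b, ∑ c, -(p3 a b c * Real.log (p3 a b c))) + ∑ b, -(pb b * Real.log (pb b))
      ≤ (∑ a, ∑ b, -(pab a b * Real.log (pab a b)))
        + ∑ b, ∑ c, -(pbc b c * Real.log (pbc b c)) := by
  classical
  have hab : ∀ a b, 0 ≤ pab a b := fun a b =>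
    (mAB a b) ▸ Finset.sum_nonneg (fun c _ => h3 a b c)
  have hbc : ∀ b c, 0 ≤ pbc b c := fun b c =>
    (mBC b c) ▸ Finset.sum_nonneg (fun a _ => h3 a b c)
  have hpb : ∀ b, 0 ≤ pb b := fun b =>
    (mB b) ▸ Finset.sum_nonneg (fun a _ => hab a b)
  have hd1 : ∀ a b c, p3 a b c ≤ pab a b := fun a b c =>
    (mAB a b) ▸ Finset.single_le_sum (fun c' _ => h3 a b c') (Finset.mem_univ c)
  have hd2 : ∀ a b c, p3 a b c ≤ pbc b c := fun a b c =>
    (mBC b c) ▸ Finset.single_le_sum (fun a' _ => h3 a' b c) (Finset.mem_univ a)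
  have hd3 : ∀ a b, pab a b ≤ pb b := fun a b =>
    (mB b) ▸ Finset.single_le_sum (fun a' _ => hab a' b) (Finset.mem_univ a)
  set q : α → β → γ → ℝ := fun a b c => if pb b = 0 then 0 else pab a b * pbc b c / pb b with hq
  have hq0 : ∀ a b c, 0 ≤ q a b c := by
    intro a b c
    rw [hq]
    dsimp only
    split
    · exact le_rfl
    · exact div_nonneg (mul_nonneg (hab a b) (hbc b c)) (hpb b)
  have key : ∀ a b c, p3 a b c - q a b c ≤
      (-(p3 a b c * Real.log (pab a b)) + -(p3 a b c * Real.log (pbc b c)))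
      - (-(p3 a b c * Real.log (p3 a b c)) + -(p3 a b c * Real.log (pb b))) := by
    intro a b c
    rcases eq_or_lt_of_le (h3 a b c) with h0 | hpos
    · rw [← h0]
      have := hq0 a b c
      simp only [zero_mul, neg_zero, zero_sub]
      linarith
    · have hpab : 0 < pab a b := lt_of_lt_of_le hpos (hd1 a b c)
      have hpbc : 0 < pbc b c := lt_of_lt_of_le hpos (hd2 a b c)
      have hpbb : 0 < pb b := lt_of_lt_of_le hpab (hd3 a b)
      have hqv : q a b c = pab a b * pbc b c / pb b := by
        rw [hq]; exact if_neg (ne_of_gt hpbb)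
      have hqpos : 0 < q a b c := by rw [hqv]; positivity
      have hlog : Real.log (q a b c / p3 a b c) ≤ q a b c / p3 a b c - 1 :=
        Real.log_le_sub_one_of_pos (by positivity)
      have hexp : Real.log (q a b c / p3 a b c)
          = Real.log (pab a b) + Real.log (pbc b c) - Real.log (pb b) - Real.log (p3 a b c) := by
        rw [Real.log_div (ne_of_gt hqpos) (ne_of_gt hpos), hqv,
            Real.log_div (ne_of_gt (mul_pos hpab hpbc)) (ne_of_gt hpbb),
            Real.log_mul (ne_of_gt hpab) (ne_of_gt hpbc)]
      have hmul := mul_le_mul_of_nonneg_left hlog (le_of_lt hpos)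
      rw [hexp] at hmul
      have h2 : p3 a b c * (q a b c / p3 a b c - 1) = q a b c - p3 a b c := by
        field_simp
      rw [h2] at hmul
      nlinarith [hmul]
  have hsum : ∑ a, ∑ b, ∑ c, (p3 a b c - q a b c) ≤
      ∑ a, ∑ b, ∑ c, ((-(p3 a b c * Real.log (pab a b)) + -(p3 a b c * Real.log (pbc b c)))
        - (-(p3 a b c * Real.log (p3 a b c)) + -(p3 a b c * Real.log (pb b)))) :=
    Finset.sum_le_sum fun a _ => Finset.sum_le_sum fun b _ =>
      Finset.sum_le_sum fun c _ => key a b c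
  have hP : ∑ a, ∑ b, ∑ c, p3 a b c = 1 := by
    calc ∑ a, ∑ b, ∑ c, p3 a b c = ∑ a, ∑ b, pab a b :=
          Finset.sum_congr rfl fun a _ => Finset.sum_congr rfl fun b _ => mAB a b
      _ = ∑ b, ∑ a, pab a b := Finset.sum_comm
      _ = ∑ b, pb b := Finset.sum_congr rfl fun b _ => mB b
      _ = 1 := tot
  have hQb : ∀ b, ∑ a, ∑ c, q a b c = pb b := by
    intro b
    by_cases h : pb b = 0
    · have hz : ∀ a c, q a b c = 0 := fun a c => by rw [hq]; exact if_pos h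
      simp [hz, h]
    · have hv : ∀ a c, q a b c = pab a b * pbc b c / pb b := fun a c => by
        rw [hq]; exact if_neg h
      calc ∑ a, ∑ c, q a b c = ∑ a, (pab a b * pb b / pb b) := by
            refine Finset.sum_congr rfl fun a _ => ?_
            rw [show (∑ c, q a b c) = ∑ c, pab a b * pbc b c / pb b from
              Finset.sum_congr rfl fun c _ => hv a c]
            rw [← Finset.sum_div, ← Finset.mul_sum, mB' b]
        _ = ∑ a, pab a b := by
            refine Finset.sum_congr rfl fun a _ => ?_
            rw [mul_div_assoc, div_self h, mul_one]
        _ = pb b := mB b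
  have hQ : ∑ a, ∑ b, ∑ c, q a b c = 1 := by
    calc ∑ a, ∑ b, ∑ c, q a b c = ∑ b, ∑ a, ∑ c, q a b c := Finset.sum_comm
      _ = ∑ b, pb b := Finset.sum_congr rfl fun b _ => hQb b
      _ = 1 := tot
  have hL : ∑ a, ∑ b, ∑ c, (p3 a b c - q a b c) = 0 := by
    simp only [Finset.sum_sub_distrib]
    rw [hP, hQ]; ring
  rw [hL] at hsum
  have hR : ∑ a, ∑ b, ∑ c, ((-(p3 a b c * Real.log (pab a b)) + -(p3 a b c * Real.log (pbc b c)))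
        - (-(p3 a b c * Real.log (p3 a b c)) + -(p3 a b c * Real.log (pb b))))
      = ((∑ a, ∑ b, ∑ c, -(p3 a b c * Real.log (pab a b)))
          + ∑ a, ∑ b, ∑ c, -(p3 a b c * Real.log (pbc b c)))
        - ((∑ a, ∑ b, ∑ c, -(p3 a b c * Real.log (p3 a b c)))
          + ∑ a, ∑ b, ∑ c, -(p3 a b c * Real.log (pb b))) := by
    simp only [Finset.sum_sub_distrib, Finset.sum_add_distrib]
  rw [hR] at hsum
  have gAB : ∑ a, ∑ b, -(pab a b * Real.log (pab a b))
      = ∑ a, ∑ b, ∑ c, -(p3 a b c * Real.log (pab a b)) := by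
    refine Finset.sum_congr rfl fun a _ => Finset.sum_congr rfl fun b _ => ?_
    rw [← mAB a b, Finset.sum_mul, ← Finset.sum_neg_distrib]
  have gBC : ∑ b, ∑ c, -(pbc b c * Real.log (pbc b c))
      = ∑ a, ∑ b, ∑ c, -(p3 a b c * Real.log (pbc b c)) := by
    calc ∑ b, ∑ c, -(pbc b c * Real.log (pbc b c))
        = ∑ b, ∑ c, ∑ a, -(p3 a b c * Real.log (pbc b c)) := by
          refine Finset.sum_congr rfl fun b _ => Finset.sum_congr rfl fun c _ => ?_
          rw [← mBC b c, Finset.sum_mul, ← Finset.sum_neg_distrib]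
      _ = ∑ b, ∑ a, ∑ c, -(p3 a b c * Real.log (pbc b c)) :=
          Finset.sum_congr rfl fun b _ => Finset.sum_comm
      _ = ∑ a, ∑ b, ∑ c, -(p3 a b c * Real.log (pbc b c)) := Finset.sum_comm
  have gB : ∑ b, -(pb b * Real.log (pb b))
      = ∑ a, ∑ b, ∑ c, -(p3 a b c * Real.log (pb b)) := by
    calc ∑ b, -(pb b * Real.log (pb b))
        = ∑ b, ∑ a, -(pab a b * Real.log (pb b)) := by
          refine Finset.sum_congr rfl fun b _ => ?_
          rw [← mB b, Finset.sum_mul, ← Finset.sum_neg_distrib]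
      _ = ∑ b, ∑ a, ∑ c, -(p3 a b c * Real.log (pb b)) := by
          refine Finset.sum_congr rfl fun b _ => Finset.sum_congr rfl fun a _ => ?_
          rw [← mAB a b, Finset.sum_mul, ← Finset.sum_neg_distrib]
      _ = ∑ a, ∑ b, ∑ c, -(p3 a b c * Real.log (pb b)) := Finset.sum_comm
  rw [gAB, gBC, gB]
  linarith

lemma entropy_submod {α β γ : Type} [Fintype α] [DecidableEq α] [Fintype β] [DecidableEq β]
    [Fintype γ] [DecidableEq γ] (hμ : IsPMF μ) (A : Ω → α) (B : Ω → β) (C : Ω → γ) :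
    entropy μ (fun ω => (A ω, B ω, C ω)) + entropy μ B
      ≤ entropy μ (fun ω => (A ω, B ω)) + entropy μ (fun ω => (B ω, C ω)) := by
  have e1 : entropy μ (fun ω => (A ω, B ω, C ω)) = ∑ a : α, ∑ b : β, ∑ c : γ,
      -(probOf μ (fun ω => (A ω, B ω, C ω)) (a, b, c) *
        Real.log (probOf μ (fun ω => (A ω, B ω, C ω)) (a, b, c))) := by
    unfold entropy; simp only [Fintype.sum_prod_type]
  have e2 : entropy μ (fun ω => (A ω, B ω)) = ∑ a : α, ∑ b : β,
      -(probOf μ (fun ω => (A ω, B ω)) (a, b) *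
        Real.log (probOf μ (fun ω => (A ω, B ω)) (a, b))) := by
    unfold entropy; simp only [Fintype.sum_prod_type]
  have e3 : entropy μ (fun ω => (B ω, C ω)) = ∑ b : β, ∑ c : γ,
      -(probOf μ (fun ω => (B ω, C ω)) (b, c) *
        Real.log (probOf μ (fun ω => (B ω, C ω)) (b, c))) := by
    unfold entropy; simp only [Fintype.sum_prod_type]
  have e4 : entropy μ B = ∑ b : β, -(probOf μ B b * Real.log (probOf μ B b)) := rfl
  rw [e1, e2, e3, e4]
  have mAB : ∀ (a : α) (b : β), ∑ c : γ, probOf μ (fun ω => (A ω, B ω, C ω)) (a, b, c)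
      = probOf μ (fun ω => (A ω, B ω)) (a, b) := by
    intro a b
    calc ∑ c : γ, probOf μ (fun ω => (A ω, B ω, C ω)) (a, b, c)
        = ∑ c : γ, probOf μ (fun ω => ((A ω, B ω), C ω)) ((a, b), c) :=
          Finset.sum_congr rfl fun c _ => probOf_eq_of_iff _ _ _ _
            (fun ω => by simp [Prod.ext_iff, and_assoc])
      _ = probOf μ (fun ω => (A ω, B ω)) (a, b) :=
          sum_probOf_pair_right (fun ω => (A ω, B ω)) C (a, b)
  have mBC : ∀ (b : β) (c : γ), ∑ a : α, probOf μ (fun ω => (A ω, B ω, C ω)) (a, b, c)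
      = probOf μ (fun ω => (B ω, C ω)) (b, c) := fun b c =>
    sum_probOf_pair_left A (fun ω => (B ω, C ω)) (b, c)
  have mB : ∀ b : β, ∑ a : α, probOf μ (fun ω => (A ω, B ω)) (a, b) = probOf μ B b :=
    fun b => sum_probOf_pair_left A B b
  have mB' : ∀ b : β, ∑ c : γ, probOf μ (fun ω => (B ω, C ω)) (b, c) = probOf μ B b :=
    fun b => sum_probOf_pair_right B C b
  exact gibbs_submod _ _ _ _ (fun a b c => probOf_nonneg hμ.1 _ _) mAB mBC mB mB'
    (sum_probOf hμ B)

lemma entropy_pair_of_indep {α β : Type} [Fintype α] [DecidableEq α] [Fintype β] [DecidableEq β]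
    (hμ : IsPMF μ) (U : Ω → α) (V : Ω → β)
    (h : ∀ a b, probOf μ (fun ω => (U ω, V ω)) (a, b) = probOf μ U a * probOf μ V b) :
    entropy μ (fun ω => (U ω, V ω)) = entropy μ U + entropy μ V := by
  unfold entropy
  rw [Fintype.sum_prod_type]
  have key : ∀ (a : α) (b : β), -(probOf μ (fun ω => (U ω, V ω)) (a, b) *
        Real.log (probOf μ (fun ω => (U ω, V ω)) (a, b)))
      = probOf μ V b * -(probOf μ U a * Real.log (probOf μ U a))
        + probOf μ U a * -(probOf μ V b * Real.log (probOf μ V b)) := by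
    intro a b
    rw [h a b]
    rcases eq_or_ne (probOf μ U a) 0 with h1 | h1
    · simp [h1]
    rcases eq_or_ne (probOf μ V b) 0 with h2 | h2
    · simp [h2]
    rw [Real.log_mul h1 h2]; ring
  simp only [key]
  calc ∑ a, ∑ b, (probOf μ V b * -(probOf μ U a * Real.log (probOf μ U a))
        + probOf μ U a * -(probOf μ V b * Real.log (probOf μ V b)))
      = ∑ a, ((∑ b, probOf μ V b) * -(probOf μ U a * Real.log (probOf μ U a))
        + probOf μ U a * ∑ b, -(probOf μ V b * Real.log (probOf μ V b))) := by
        refine Finset.sum_congr rfl fun a _ => ?_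
        rw [Finset.sum_add_distrib, ← Finset.sum_mul, ← Finset.mul_sum]
    _ = ∑ a, (-(probOf μ U a * Real.log (probOf μ U a))
        + probOf μ U a * ∑ b, -(probOf μ V b * Real.log (probOf μ V b))) := by
        rw [sum_probOf hμ V]; simp
    _ = (∑ a, -(probOf μ U a * Real.log (probOf μ U a)))
        + (∑ a, probOf μ U a) * ∑ b, -(probOf μ V b * Real.log (probOf μ V b)) := by
        rw [Finset.sum_add_distrib, ← Finset.sum_mul]
    _ = (∑ a, -(probOf μ U a * Real.log (probOf μ U a)))
        + ∑ b, -(probOf μ V b * Real.log (probOf μ V b)) := by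
        rw [sum_probOf hμ U, one_mul]

lemma entropy_const_unit (hμ : IsPMF μ) : entropy μ (fun _ : Ω => ()) = 0 := by
  have h1 : probOf μ (fun _ : Ω => ()) () = 1 := by
    unfold probOf; simpa using hμ.2
  unfold entropy
  simp [h1]

lemma entropy_pair_le_add {α γ : Type} [Fintype α] [DecidableEq α] [Fintype γ] [DecidableEq γ]
    (hμ : IsPMF μ) (U : Ω → α) (V : Ω → γ) :
    entropy μ (fun ω => (U ω, V ω)) ≤ entropy μ U + entropy μ V := by
  have h : entropy μ (fun ω => (U ω, (), V ω)) + entropy μ (fun _ : Ω => ())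
      ≤ entropy μ (fun ω => (U ω, ())) + entropy μ (fun ω => ((), V ω)) :=
    entropy_submod hμ U (fun _ => ()) V
  have e1 : entropy μ (fun ω => (U ω, (), V ω)) = entropy μ (fun ω => (U ω, V ω)) :=
    entropy_comp_inj (fun p : α × γ => (p.1, (), p.2))
      (Function.LeftInverse.injective (g := fun p : α × Unit × γ => (p.1, p.2.2)) fun p => rfl)
      (fun ω => (U ω, V ω))
  have e2 : entropy μ (fun ω => (U ω, ())) = entropy μ U :=
    entropy_comp_inj (fun u : α => (u, ()))
      (Function.LeftInverse.injective (g := fun p : α × Unit => p.1) fun p => rfl) U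
  have e3 : entropy μ (fun ω => ((), V ω)) = entropy μ V :=
    entropy_comp_inj (fun v : γ => ((), v))
      (Function.LeftInverse.injective (g := fun p : Unit × γ => p.2) fun p => rfl) V
  rw [e1, e2, e3, entropy_const_unit hμ] at h
  linarith

end Stmt3Aux

set_option maxHeartbeats 1000000

open Stmt3Aux in
/-- With `X1, X2, X3` mutually independent of entropy `a` each,
`H(Y12) ≤ a`, `H(Y21) ≤ a`, `H(Y22) ≤ a`, `Y20` a deterministic function of
`(X1, X2)`, `Y21` a deterministic function of `(Y12, Y20)`, `Y22` a deterministic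
function of `(X3, Y21)`, and `H((X1,X2) | (Y12,Y22)) ≤ ε` with `ε ≥ 0`, we have
`H((Y21, Y22)) ≤ a + 2ε`. -/
theorem stmt3 {Ω α₁ α₂ α₃ β₁₂ β₂₀ β₂₁ β₂₂ : Type} [Fintype Ω]
    [Fintype α₁] [DecidableEq α₁] [Fintype α₂] [DecidableEq α₂]
    [Fintype α₃] [DecidableEq α₃]
    [Fintype β₁₂] [DecidableEq β₁₂] [Fintype β₂₀] [DecidableEq β₂₀]
    [Fintype β₂₁] [DecidableEq β₂₁] [Fintype β₂₂] [DecidableEq β₂₂]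
    (μ : Ω → ℝ) (hμ : IsPMF μ)
    (X1 : Ω → α₁) (X2 : Ω → α₂) (X3 : Ω → α₃)
    (Y12 : Ω → β₁₂) (Y20 : Ω → β₂₀) (Y21 : Ω → β₂₁) (Y22 : Ω → β₂₂)
    (a ε : ℝ) (hε : 0 ≤ ε)
    (hindep : MutIndep3 μ X1 X2 X3)
    (hX1 : entropy μ X1 = a) (hX2 : entropy μ X2 = a) (hX3 : entropy μ X3 = a)
    (hY12 : entropy μ Y12 ≤ a) (hY21 : entropy μ Y21 ≤ a) (hY22 : entropy μ Y22 ≤ a)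
    (hf20 : ∃ f : α₁ × α₂ → β₂₀, ∀ ω, Y20 ω = f (X1 ω, X2 ω))
    (hf21 : ∃ g : β₁₂ × β₂₀ → β₂₁, ∀ ω, Y21 ω = g (Y12 ω, Y20 ω))
    (hf22 : ∃ h : α₃ × β₂₁ → β₂₂, ∀ ω, Y22 ω = h (X3 ω, Y21 ω))
    (hcond : condEntropy μ (fun ω => (X1 ω, X2 ω)) (fun ω => (Y12 ω, Y22 ω)) ≤ ε) :
    entropy μ (fun ω => (Y21 ω, Y22 ω)) ≤ a + 2 * ε := by
  obtain ⟨f20, hf20e⟩ := hf20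
  obtain ⟨g21, hf21e⟩ := hf21
  obtain ⟨h22, hf22e⟩ := hf22
  -- hcond in entropy form
  have hcond' : entropy μ (fun ω => ((X1 ω, X2 ω), (Y12 ω, Y22 ω)))
      - entropy μ (fun ω => (Y12 ω, Y22 ω)) ≤ ε := hcond
  -- subadditivity instances
  have hsub3 : entropy μ (fun ω => (Y12 ω, Y22 ω)) ≤ entropy μ Y12 + entropy μ Y22 :=
    entropy_pair_le_add hμ Y12 Y22
  have hsub9 : entropy μ (fun ω => (Y21 ω, X3 ω)) ≤ entropy μ Y21 + entropy μ X3 :=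
    entropy_pair_le_add hμ Y21 X3
  -- E4 ≤ E5
  have hmono4 : entropy μ (fun ω => (Y12 ω, Y21 ω, Y22 ω))
      ≤ entropy μ (fun ω => ((X1 ω, X2 ω), (Y12 ω, Y21 ω, Y22 ω))) :=
    entropy_le_entropy_pair hμ (fun ω => (X1 ω, X2 ω)) (fun ω => (Y12 ω, Y21 ω, Y22 ω))
  have heq45 : entropy μ (fun ω => ((X1 ω, X2 ω), (Y12 ω, Y21 ω, Y22 ω)))
      = entropy μ (fun ω => ((X1 ω, X2 ω), (Y12 ω, Y22 ω))) := by
    have hfun : (fun ω => ((X1 ω, X2 ω), (Y12 ω, Y21 ω, Y22 ω)))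
        = fun ω => (fun p : (α₁ × α₂) × β₁₂ × β₂₂ =>
            (p.1, (p.2.1, g21 (p.2.1, f20 p.1), p.2.2)))
          ((fun ω => ((X1 ω, X2 ω), (Y12 ω, Y22 ω))) ω) := by
      funext ω
      show ((X1 ω, X2 ω), (Y12 ω, Y21 ω, Y22 ω))
        = ((X1 ω, X2 ω), (Y12 ω, g21 (Y12 ω, f20 (X1 ω, X2 ω)), Y22 ω))
      rw [← hf20e ω, ← hf21e ω]
    rw [hfun]
    exact entropy_comp_inj
      (fun p : (α₁ × α₂) × β₁₂ × β₂₂ => (p.1, (p.2.1, g21 (p.2.1, f20 p.1), p.2.2)))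
      (Function.LeftInverse.injective
        (g := fun p : (α₁ × α₂) × β₁₂ × β₂₁ × β₂₂ => (p.1, (p.2.1, p.2.2.2))) fun p => rfl)
      (fun ω => ((X1 ω, X2 ω), (Y12 ω, Y22 ω)))
  have h45 : entropy μ (fun ω => (Y12 ω, Y21 ω, Y22 ω))
      ≤ entropy μ (fun ω => ((X1 ω, X2 ω), (Y12 ω, Y22 ω))) := heq45 ▸ hmono4
  -- submod A : E6 + E1 ≤ E4 + E7
  have h6 : entropy μ (fun ω => (Y12 ω, (Y21 ω, Y22 ω), X3 ω))
        + entropy μ (fun ω => (Y21 ω, Y22 ω))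
      ≤ entropy μ (fun ω => (Y12 ω, Y21 ω, Y22 ω))
        + entropy μ (fun ω => ((Y21 ω, Y22 ω), X3 ω)) :=
    entropy_submod hμ Y12 (fun ω => (Y21 ω, Y22 ω)) X3
  -- E7 = E9
  have hE79 : entropy μ (fun ω => ((Y21 ω, Y22 ω), X3 ω))
      = entropy μ (fun ω => (Y21 ω, X3 ω)) := by
    have hfun : (fun ω => ((Y21 ω, Y22 ω), X3 ω))
        = fun ω => (fun p : β₂₁ × α₃ => ((p.1, h22 (p.2, p.1)), p.2))
          ((fun ω => (Y21 ω, X3 ω)) ω) := by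
      funext ω
      show ((Y21 ω, Y22 ω), X3 ω) = ((Y21 ω, h22 (X3 ω, Y21 ω)), X3 ω)
      rw [← hf22e ω]
    rw [hfun]
    exact entropy_comp_inj
      (fun p : β₂₁ × α₃ => ((p.1, h22 (p.2, p.1)), p.2))
      (Function.LeftInverse.injective
        (g := fun p : (β₂₁ × β₂₂) × α₃ => (p.1.1, p.2)) fun p => rfl)
      (fun ω => (Y21 ω, X3 ω))
  -- E10 ≤ E6
  have hmono10 : entropy μ (fun ω => ((Y12 ω, Y22 ω), X3 ω))
      ≤ entropy μ (fun ω => (Y21 ω, ((Y12 ω, Y22 ω), X3 ω))) :=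
    entropy_le_entropy_pair hμ Y21 (fun ω => ((Y12 ω, Y22 ω), X3 ω))
  have heq106 : entropy μ (fun ω => (Y12 ω, (Y21 ω, Y22 ω), X3 ω))
      = entropy μ (fun ω => (Y21 ω, ((Y12 ω, Y22 ω), X3 ω))) :=
    entropy_comp_inj (fun p : β₂₁ × ((β₁₂ × β₂₂) × α₃) => (p.2.1.1, (p.1, p.2.1.2), p.2.2))
      (Function.LeftInverse.injective
        (g := fun p : β₁₂ × (β₂₁ × β₂₂) × α₃ => (p.2.1.1, ((p.1, p.2.1.2), p.2.2))) fun p => rfl)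
      (fun ω => (Y21 ω, ((Y12 ω, Y22 ω), X3 ω)))
  -- submod B : E11 + E3 ≤ E5 + E10
  have h10 : entropy μ (fun ω => ((X1 ω, X2 ω), (Y12 ω, Y22 ω), X3 ω))
        + entropy μ (fun ω => (Y12 ω, Y22 ω))
      ≤ entropy μ (fun ω => ((X1 ω, X2 ω), (Y12 ω, Y22 ω)))
        + entropy μ (fun ω => ((Y12 ω, Y22 ω), X3 ω)) :=
    entropy_submod hμ (fun ω => (X1 ω, X2 ω)) (fun ω => (Y12 ω, Y22 ω)) X3
  -- E12 ≤ E11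
  have hmono12 : entropy μ (fun ω => ((X1 ω, X2 ω), X3 ω))
      ≤ entropy μ (fun ω => ((Y12 ω, Y22 ω), ((X1 ω, X2 ω), X3 ω))) :=
    entropy_le_entropy_pair hμ (fun ω => (Y12 ω, Y22 ω)) (fun ω => ((X1 ω, X2 ω), X3 ω))
  have heq1211 : entropy μ (fun ω => ((X1 ω, X2 ω), (Y12 ω, Y22 ω), X3 ω))
      = entropy μ (fun ω => ((Y12 ω, Y22 ω), ((X1 ω, X2 ω), X3 ω))) :=
    entropy_comp_inj
      (fun p : (β₁₂ × β₂₂) × ((α₁ × α₂) × α₃) => (p.2.1, p.1, p.2.2))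
      (Function.LeftInverse.injective
        (g := fun p : (α₁ × α₂) × (β₁₂ × β₂₂) × α₃ => (p.2.1, (p.1, p.2.2))) fun p => rfl)
      (fun ω => ((Y12 ω, Y22 ω), ((X1 ω, X2 ω), X3 ω)))
  -- independence : E12 = 3a
  have hp12 : ∀ (x : α₁) (y : α₂), probOf μ (fun ω => (X1 ω, X2 ω)) (x, y)
      = probOf μ X1 x * probOf μ X2 y := by
    intro x y
    have hm : probOf μ (fun ω => (X1 ω, X2 ω)) (x, y)
        = ∑ c, probOf μ (fun ω => (X1 ω, X2 ω, X3 ω)) (x, y, c) := by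
      rw [show (∑ c, probOf μ (fun ω => (X1 ω, X2 ω, X3 ω)) (x, y, c))
          = ∑ c, probOf μ (fun ω => ((X1 ω, X2 ω), X3 ω)) ((x, y), c) from
        Finset.sum_congr rfl fun c _ =>
          (probOf_eq_of_iff _ _ _ _ (fun ω => by simp [Prod.ext_iff, and_assoc])).symm]
      exact (sum_probOf_pair_right (fun ω => (X1 ω, X2 ω)) X3 (x, y)).symm
    rw [hm]
    calc ∑ c, probOf μ (fun ω => (X1 ω, X2 ω, X3 ω)) (x, y, c)
        = ∑ c, probOf μ X1 x * probOf μ X2 y * probOf μ X3 c :=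
          Finset.sum_congr rfl fun c _ => hindep x y c
      _ = probOf μ X1 x * probOf μ X2 y * ∑ c, probOf μ X3 c := by
          rw [← Finset.mul_sum]
      _ = probOf μ X1 x * probOf μ X2 y := by rw [sum_probOf hμ X3, mul_one]
  have hIndepW3 : ∀ (w : α₁ × α₂) (c : α₃),
      probOf μ (fun ω => ((X1 ω, X2 ω), X3 ω)) (w, c)
        = probOf μ (fun ω => (X1 ω, X2 ω)) w * probOf μ X3 c := by
    rintro ⟨x, y⟩ c
    calc probOf μ (fun ω => ((X1 ω, X2 ω), X3 ω)) ((x, y), c)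
        = probOf μ (fun ω => (X1 ω, X2 ω, X3 ω)) (x, y, c) :=
          probOf_eq_of_iff _ _ _ _ (fun ω => by simp [Prod.ext_iff, and_assoc])
      _ = probOf μ X1 x * probOf μ X2 y * probOf μ X3 c := hindep x y c
      _ = probOf μ (fun ω => (X1 ω, X2 ω)) (x, y) * probOf μ X3 c := by rw [hp12]
  have hW : entropy μ (fun ω => (X1 ω, X2 ω)) = a + a := by
    have := entropy_pair_of_indep hμ X1 X2 hp12
    rw [hX1, hX2] at this; exact this
  have hE12 : entropy μ (fun ω => ((X1 ω, X2 ω), X3 ω)) = a + a + a := by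
    have h' : entropy μ (fun ω => ((X1 ω, X2 ω), X3 ω))
        = entropy μ (fun ω => (X1 ω, X2 ω)) + entropy μ X3 :=
      entropy_pair_of_indep hμ (fun ω => (X1 ω, X2 ω)) X3 hIndepW3
    rw [h', hW, hX3]
  -- conclude
  rw [hX3] at hsub9
  rw [heq106] at h6
  rw [← heq1211] at hmono12
  linarith [hmono10, h6, h45, hE79, hsub3, hsub9, hcond', h10, hmono12, hE12, hY12, hY21, hY22]
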